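/- Let L be a reduced 1-compact compactly generated multiplicative lattice, p a minimal prime element of L, and suppose Clique(Γᵐ(L)) < ∞. Then the set A = {x* : x ≰ p} has a greatest element. -/

import Mathlib

variable {α : Type*}

/-- Iterated product `a^n` in a multiplicative lattice (with `a^0 = ⊤`). -/
def mpow [CompleteLattice α] (mul : α → α → α) (a : α) : ℕ → α
  | 0 => ⊤
  | n + 1 => mul a (mpow mul a n)

/-- `mul` makes the complete lattice `α` into a multiplicative lattice. -/
def IsMulLattice [CompleteLattice α] (mul : α → α → α) : Prop :=
  (∀ a b : α, mul a b = mul b a) ∧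
  (∀ a b c : α, mul (mul a b) c = mul a (mul b c)) ∧
  (∀ (a : α) (s : Set α), mul a (sSup s) = ⨆ b ∈ s, mul a b) ∧
  (∀ a b : α, mul a b ≤ a ⊓ b) ∧
  (∀ a : α, mul a ⊤ = a)

/-- The multiplicative lattice is reduced: the only nilpotent element is `⊥`. -/
def LatReduced [CompleteLattice α] (mul : α → α → α) : Prop :=
  ∀ (a : α) (n : ℕ), mpow mul a (n + 1) = ⊥ → a = ⊥

/-- `a* = sup {x | x·a = 0}`. -/
def starAnn [CompleteLattice α] (mul : α → α → α) (a : α) : α :=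
  sSup {x : α | mul x a = ⊥}

/-- A prime element of a multiplicative lattice. -/
def IsPrimeElt [CompleteLattice α] (mul : α → α → α) (p : α) : Prop :=
  p ≠ ⊤ ∧ ∀ a b : α, mul a b ≤ p → a ≤ p ∨ b ≤ p

/-- The zero-divisor graph `Γᵐ(L)` of a multiplicative lattice. -/
def zdg [CompleteLattice α] (mul : α → α → α) : SimpleGraph α where
  Adj a b := a ≠ b ∧ a ≠ ⊥ ∧ b ≠ ⊥ ∧ mul a b = ⊥ ∧ mul b a = ⊥
  symm := ⟨fun a b h => ⟨h.1.symm, h.2.2.1, h.2.1, h.2.2.2.2, h.2.2.2.1⟩⟩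
  loopless := ⟨fun a h => h.1 rfl⟩

/-- `Clique(Γᵐ(L)) < ∞`. -/
def CliqueBounded [CompleteLattice α] (mul : α → α → α) : Prop :=
  ∃ N : ℕ, ∀ s : Finset α, (zdg mul).IsClique ↑s → s.card ≤ N

section Aux

variable [CompleteLattice α] {mul : α → α → α}

lemma aux_mul_mono_right (hL : IsMulLattice mul) (a : α) {b c : α} (h : b ≤ c) :
    mul a b ≤ mul a c := by
  have hs : sSup ({b, c} : Set α) = c := by rw [sSup_pair, sup_eq_right.2 h]
  have := hL.2.2.1 a ({b, c} : Set α)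
  rw [hs] at this
  rw [this]
  exact le_biSup _ (Set.mem_insert b {c})

lemma aux_mul_mono (hL : IsMulLattice mul) {a b c d : α} (h1 : a ≤ c) (h2 : b ≤ d) :
    mul a b ≤ mul c d := by
  refine le_trans (aux_mul_mono_right hL a h2) ?_
  rw [hL.1 a d, hL.1 c d]
  exact aux_mul_mono_right hL d h1

lemma aux_starAnn_mul_self (hL : IsMulLattice mul) (a : α) :
    mul (starAnn mul a) a = ⊥ := by
  rw [hL.1, starAnn, hL.2.2.1]
  refine le_bot_iff.1 (iSup_le fun b => iSup_le fun hb => ?_)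
  rw [hL.1]
  exact le_of_eq hb

lemma aux_bot_mul (hL : IsMulLattice mul) (a : α) : mul ⊥ a = ⊥ :=
  le_bot_iff.1 (le_trans (hL.2.2.2.1 _ _) inf_le_left)

/-- No strictly increasing chain of annihilator elements when the clique number is finite. -/
lemma aux_no_strict_chain (hL : IsMulLattice mul) (hred : LatReduced mul)
    (hclique : CliqueBounded mul) (a : ℕ → α) :
    ¬ StrictMono (fun n => starAnn mul (a n)) := by
  intro hsm
  classical
  obtain ⟨N, hN⟩ := hclique
  set c : ℕ → α := fun i => mul (starAnn mul (a (i + 1))) (a i) with hc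
  have hcbot : ∀ i, c i ≠ ⊥ := by
    intro i h
    have : starAnn mul (a (i + 1)) ≤ starAnn mul (a i) := le_sSup h
    exact absurd this (not_le_of_gt (hsm (Nat.lt_succ_self i)))
  have hadj : ∀ i j, i < j → mul (c i) (c j) = ⊥ := by
    intro i j hij
    have h1 : c i ≤ starAnn mul (a j) :=
      le_trans (le_trans (hL.2.2.2.1 _ _) inf_le_left) (hsm.monotone hij)
    have h2 : c j ≤ a j := le_trans (hL.2.2.2.1 _ _) inf_le_right
    exact le_bot_iff.1 (le_trans (aux_mul_mono hL h1 h2)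
      (le_of_eq (aux_starAnn_mul_self hL (a j))))
  have hadj' : ∀ i j, i ≠ j → mul (c i) (c j) = ⊥ := by
    intro i j hij
    rcases hij.lt_or_gt with h | h
    · exact hadj i j h
    · rw [hL.1]; exact hadj j i h
  have hne : ∀ i j, i ≠ j → c i ≠ c j := by
    intro i j hij heq
    have hb : mul (c i) (c i) = ⊥ := by
      have := hadj' i j hij
      rw [← heq] at this
      exact this
    have : mpow mul (c i) 2 = ⊥ := by
      show mul (c i) (mpow mul (c i) 1) = ⊥
      show mul (c i) (mul (c i) ⊤) = ⊥
      rw [hL.2.2.2.2, hb]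
    exact hcbot i (hred (c i) 1 this)
  have hinj : Set.InjOn c ↑(Finset.range (N + 1)) := fun i _ j _ h => by
    by_contra hij
    exact hne i j hij h
  have hclq : (zdg mul).IsClique ↑((Finset.range (N + 1)).image c) := by
    intro x hx y hy hxy
    simp only [Finset.coe_image, Set.mem_image] at hx hy
    obtain ⟨i, _, rfl⟩ := hx
    obtain ⟨j, _, rfl⟩ := hy
    have hij : i ≠ j := fun h => hxy (by rw [h])
    exact ⟨hxy, hcbot i, hcbot j, hadj' i j hij, hadj' j i hij.symm⟩
  have hcard : ((Finset.range (N + 1)).image c).card = N + 1 := by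
    rw [Finset.card_image_of_injOn hinj, Finset.card_range]
  have := hN _ hclq
  omega

end Aux

theorem greatest_annihilator_outside_minimal_prime [CompleteLattice α]
    [IsCompactlyGenerated α] (mul : α → α → α) (hL : IsMulLattice mul)
    (hred : LatReduced mul) (htop : IsCompactElement (⊤ : α))
    (hclique : CliqueBounded mul) (p : α) (hp : IsPrimeElt mul p)
    (hpmin : ∀ q : α, IsPrimeElt mul q → q ≤ p → q = p) :
    ∃ g : α, (∃ x : α, ¬ x ≤ p ∧ g = starAnn mul x) ∧
      ∀ a : α, (∃ x : α, ¬ x ≤ p ∧ a = starAnn mul x) → a ≤ g := by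
  -- First, find a maximal element of the set of such annihilators.
  have hmax : ∃ g : α, (∃ x : α, ¬ x ≤ p ∧ g = starAnn mul x) ∧
      ∀ a : α, (∃ x : α, ¬ x ≤ p ∧ a = starAnn mul x) → ¬ g < a := by
    by_contra h
    push_neg at h
    have step : ∀ x : α, ¬ x ≤ p →
        ∃ y : α, ¬ y ≤ p ∧ starAnn mul x < starAnn mul y := by
      intro x hx
      obtain ⟨a, ⟨y, hy, rfl⟩, hlt⟩ := h (starAnn mul x) ⟨x, hx, rfl⟩
      exact ⟨y, hy, hlt⟩
    have htopnp : ¬ (⊤ : α) ≤ p := fun hle => hp.1 (top_le_iff.1 hle)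
    let f : ℕ → {x : α // ¬ x ≤ p} := fun n =>
      Nat.rec ⟨⊤, htopnp⟩
        (fun _ prev =>
          ⟨Classical.choose (step prev.1 prev.2),
            (Classical.choose_spec (step prev.1 prev.2)).1⟩) n
    have hf : StrictMono (fun n => starAnn mul ((f n).1)) := by
      refine strictMono_nat_of_lt_succ fun n => ?_
      exact (Classical.choose_spec (step (f n).1 (f n).2)).2
    exact aux_no_strict_chain hL hred hclique (fun n => (f n).1) hf
  obtain ⟨g, ⟨x, hx, rfl⟩, hgmax⟩ := hmax
  refine ⟨starAnn mul x, ⟨x, hx, rfl⟩, ?_⟩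
  rintro a ⟨y, hy, rfl⟩
  -- Consider z = x·y, which is also not below p.
  have hz : ¬ mul x y ≤ p := by
    intro hle
    rcases hp.2 x y hle with h | h
    · exact hx h
    · exact hy h
  have h1 : starAnn mul x ≤ starAnn mul (mul x y) := by
    refine sSup_le fun w hw => le_sSup ?_
    show mul w (mul x y) = ⊥
    rw [← hL.2.1, hw]
    exact aux_bot_mul hL y
  have h2 : starAnn mul y ≤ starAnn mul (mul x y) := by
    refine sSup_le fun w hw => le_sSup ?_
    show mul w (mul x y) = ⊥
    rw [hL.1 x y, ← hL.2.1, hw]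
    exact aux_bot_mul hL x
  have heq : starAnn mul (mul x y) = starAnn mul x := by
    rcases lt_or_eq_of_le h1 with h | h
    · exact absurd h (hgmax _ ⟨mul x y, hz, rfl⟩)
    · exact h.symm
  rw [← heq]
  exact h2
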